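/- arXiv:2206.15299 — 2 statements merged into one kernel-verified Lean document; each statement's English description precedes it below -/
import Mathlib

section
/- For n ≥ 3, the set G = {α_{n,1}, α_{1,n}} ∪ {α_{j,j} : 2 ≤ j ≤ n−1} ∪ {π_{(i,i+1),n} : 1 ≤ i ≤ n−1}, of cardinality 2n−1, generates the semigroup ⟨K_{n−1}⟩ = OCP_{n,n−1} = {α ∈ OCP_n : |im α| ≤ n−1}. -/
/-- Partial transformations on the chain with `n` elements. -/
abbrev PT (n : ℕ) := Fin n → Option (Fin n)

/-- Left-to-right composition of partial transformations: `x(f*g) = g(f(x))`. -/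
instance PT.instMul (n : ℕ) : Mul (PT n) := ⟨fun f g x => (f x).bind g⟩

instance PT.instSemigroup (n : ℕ) : Semigroup (PT n) where
  mul_assoc f g h := funext fun x => by
    show ((f x).bind g).bind h = (f x).bind (fun y => (g y).bind h)
    cases f x <;> rfl

/-- Domain of a partial transformation. -/
def dom {n : ℕ} (f : PT n) : Set (Fin n) := {x | (f x).isSome}

/-- Image of a partial transformation. -/
def im {n : ℕ} (f : PT n) : Set (Fin n) := {y | ∃ x, f x = some y}

/-- `f` is a contraction: `|f x - f y| ≤ |x - y|` on its domain. -/
def IsContraction {n : ℕ} (f : PT n) : Prop :=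
  ∀ x y a b, f x = some a → f y = some b → Nat.dist a.val b.val ≤ Nat.dist x.val y.val

/-- `f` is order-preserving on its domain. -/
def IsOP {n : ℕ} (f : PT n) : Prop :=
  ∀ x y a b, f x = some a → f y = some b → x ≤ y → a ≤ b

/-- `f` is order-reversing on its domain. -/
def IsOR {n : ℕ} (f : PT n) : Prop :=
  ∀ x y a b, f x = some a → f y = some b → x ≤ y → b ≤ a

/-- `α_{1,n}` : domain `[n]\{1}`, sends `k+1 ↦ k` (0-indexed: `x ↦ x-1` for `x ≠ 0`). -/
def a1n (n : ℕ) : PT n := fun x => if _h : x.val ≠ 0 then some ⟨x.val - 1, by have := x.isLt; omega⟩ else none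

/-- `α_{n,1}` : domain `[n]\{n}`, sends `k ↦ k+1`. -/
def an1 (n : ℕ) : PT n := fun x => if h : x.val + 1 < n then some ⟨x.val + 1, h⟩ else none

/-- `α_{j,j}` : the partial identity on `[n]\{j}` (0-indexed `j`). -/
def ajj (n j : ℕ) : PT n := fun x => if x.val = j then none else some x

/-- `π_{(i,i+1),n}` : the full order-preserving contraction merging `{i,i+1}` (0-indexed)
with image `{1,…,n-1}` (0-indexed `{0,…,n-2}`). -/
def piOP (n i : ℕ) : PT n :=
  fun x => some ⟨if x.val ≤ i then x.val else x.val - 1, by have := x.isLt; split <;> omega⟩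

/-- `α_{j,n}` : injective order-preserving map with domain `[n]\{j}` and image `[n]\{n}`. -/
def ajn (n j : ℕ) : PT n :=
  fun x => if x.val = j then none
    else some ⟨if x.val < j then x.val else x.val - 1, by have := x.isLt; split <;> omega⟩

/-- The generating set `G = {α_{n,1}, α_{1,n}} ∪ {α_{j,j}} ∪ {π_{(i,i+1),n}}` (0-indexed). -/
def genG (n : ℕ) : Set (PT n) :=
  {an1 n, a1n n} ∪ (ajj n '' {j | 1 ≤ j ∧ j ≤ n - 2}) ∪ (piOP n '' {i | i ≤ n - 2})

section Helpers
variable {n : ℕ}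

lemma pt_mul_apply (f g : PT n) (x : Fin n) : (f * g) x = (f x).bind g := rfl

/-- total function as PT -/
def ofFun (g : Fin n → ℕ) : PT n := fun x => if h : g x < n then some ⟨g x, h⟩ else none

/-- partial identity avoiding C -/
def pid (C : Finset (Fin n)) : PT n := fun x => if x ∈ C then none else some x

lemma an1_some {x a : Fin n} (h : an1 n x = some a) : a.val = x.val + 1 := by
  unfold an1 at h; split at h
  · exact (Option.some.injEq _ _ ▸ h) ▸ rfl
  · cases h

lemma a1n_some {x a : Fin n} (h : a1n n x = some a) : x.val ≠ 0 ∧ a.val = x.val - 1 := by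
  unfold a1n at h; split at h
  · rename_i hx; exact ⟨hx, (Option.some.injEq _ _ ▸ h) ▸ rfl⟩
  · cases h

lemma ajj_some {j : ℕ} {x a : Fin n} (h : ajj n j x = some a) : x.val ≠ j ∧ a = x := by
  unfold ajj at h; split at h
  · cases h
  · rename_i hx; exact ⟨hx, (Option.some.injEq _ _ ▸ h).symm⟩

lemma piOP_some {i : ℕ} {x a : Fin n} (h : piOP n i x = some a) :
    a.val = if x.val ≤ i then x.val else x.val - 1 := by
  unfold piOP at h; exact (Option.some.injEq _ _ ▸ h) ▸ rfl

end Helpers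
section Easy
variable {n : ℕ}

lemma isOP_mul {f g : PT n} (hf : IsOP f) (hg : IsOP g) : IsOP (f * g) := by
  intro x y a b ha hb hxy
  rw [pt_mul_apply] at ha hb
  cases hfx : f x with
  | none => rw [hfx] at ha; cases ha
  | some u =>
  cases hfy : f y with
  | none => rw [hfy] at hb; cases hb
  | some v =>
  rw [hfx] at ha; rw [hfy] at hb
  exact hg u v a b ha hb (hf x y u v hfx hfy hxy)

lemma isContraction_mul {f g : PT n} (hf : IsContraction f) (hg : IsContraction g) :
    IsContraction (f * g) := by
  intro x y a b ha hb
  rw [pt_mul_apply] at ha hb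
  cases hfx : f x with
  | none => rw [hfx] at ha; cases ha
  | some u =>
  cases hfy : f y with
  | none => rw [hfy] at hb; cases hb
  | some v =>
  rw [hfx] at ha; rw [hfy] at hb
  exact le_trans (hg u v a b ha hb) (hf x y u v hfx hfy)

lemma im_mul_subset (f g : PT n) : im (f * g) ⊆ im g := by
  rintro a ⟨x, hx⟩
  rw [pt_mul_apply] at hx
  cases hfx : f x with
  | none => rw [hfx] at hx; cases hx
  | some u => rw [hfx] at hx; exact ⟨u, hx⟩

lemma im_ncard_le_of_misses (hn : 1 ≤ n) {f : PT n} (c : ℕ) (hcn : c < n)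
    (h : ∀ y ∈ im f, y.val ≠ c) : (im f).ncard ≤ n - 1 := by
  set cc : Fin n := ⟨c, hcn⟩ with hcc
  have hsub : im f ⊆ {cc}ᶜ := by
    intro y hy
    simp only [Set.mem_compl_iff, Set.mem_singleton_iff]
    intro hyc
    exact h y hy (by rw [hyc])
  have h1 := Set.ncard_le_ncard hsub (Set.toFinite _)
  have heq : ({cc}ᶜ : Set (Fin n)) = Set.univ \ {cc} := by ext y; simp
  have h2 : ({cc}ᶜ : Set (Fin n)).ncard = n - 1 := by
    rw [heq, Set.ncard_diff_singleton_of_mem (Set.mem_univ cc), Set.ncard_univ,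
      Nat.card_eq_fintype_card, Fintype.card_fin]
  omega

/-- The target set as a subsemigroup. -/
def SOCP (n : ℕ) : Subsemigroup (PT n) where
  carrier := {f : PT n | IsOP f ∧ IsContraction f ∧ (im f).ncard ≤ n - 1}
  mul_mem' := by
    rintro f g ⟨hf1, hf2, hf3⟩ ⟨hg1, hg2, hg3⟩
    refine ⟨isOP_mul hf1 hg1, isContraction_mul hf2 hg2, ?_⟩
    exact le_trans (Set.ncard_le_ncard (im_mul_subset f g) (Set.toFinite _)) hg3

lemma genG_subset_SOCP (hn : 3 ≤ n) : genG n ⊆ (SOCP n : Set (PT n)) := by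
  rintro f hf
  rcases hf with (hf | ⟨j, ⟨hj1, hj2⟩, rfl⟩) | ⟨i, (hi : i ≤ n - 2), rfl⟩
  · rcases hf with rfl | rfl
    · refine ⟨?_, ?_, ?_⟩
      · intro x y a b ha hb hxy
        have := an1_some ha; have := an1_some hb
        rw [Fin.le_def] at *; omega
      · intro x y a b ha hb
        have := an1_some ha; have := an1_some hb
        simp [Nat.dist]; omega
      · refine im_ncard_le_of_misses (by omega) 0 (by omega) ?_
        rintro y ⟨x, hx⟩
        have := an1_some hx
        omega
    · refine ⟨?_, ?_, ?_⟩
      · intro x y a b ha hb hxy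
        obtain ⟨hx0, ha'⟩ := a1n_some ha; obtain ⟨hy0, hb'⟩ := a1n_some hb
        rw [Fin.le_def] at *; omega
      · intro x y a b ha hb
        obtain ⟨hx0, ha'⟩ := a1n_some ha; obtain ⟨hy0, hb'⟩ := a1n_some hb
        simp [Nat.dist]; omega
      · refine im_ncard_le_of_misses (by omega) (n-1) (by omega) ?_
        rintro y ⟨x, hx⟩
        obtain ⟨hx0, ha'⟩ := a1n_some hx
        have := x.isLt; omega
  · refine ⟨?_, ?_, ?_⟩
    · intro x y a b ha hb hxy
      obtain ⟨_, rfl⟩ := ajj_some ha; obtain ⟨_, rfl⟩ := ajj_some hb; exact hxy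
    · intro x y a b ha hb
      obtain ⟨_, rfl⟩ := ajj_some ha; obtain ⟨_, rfl⟩ := ajj_some hb; exact le_rfl
    · refine im_ncard_le_of_misses (by omega) j (by omega) ?_
      rintro y ⟨x, hx⟩
      obtain ⟨hxj, rfl⟩ := ajj_some hx
      exact hxj
  · refine ⟨?_, ?_, ?_⟩
    · intro x y a b ha hb hxy
      have := piOP_some ha; have := piOP_some hb
      rw [Fin.le_def] at *
      split at * <;> split at * <;> omega
    · intro x y a b ha hb
      have := piOP_some ha; have := piOP_some hb
      simp [Nat.dist]
      split at * <;> split at * <;> omega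
    · refine im_ncard_le_of_misses (by omega) (n-1) (by omega) ?_
      rintro y ⟨x, hx⟩
      have h := piOP_some hx
      have := x.isLt
      split at h <;> omega

end Easy
section Card
variable {n : ℕ}

lemma ncard_Icc' (a b : ℕ) : (Set.Icc a b).ncard = b + 1 - a := by
  rw [← Nat.card_coe_set_eq, Nat.card_eq_card_toFinset]; simp

lemma ncard_Iic' (b : ℕ) : (Set.Iic b).ncard = b + 1 := by
  rw [← Nat.card_coe_set_eq, Nat.card_eq_card_toFinset]; simp

lemma ajj_ne_an1 (hn : 3 ≤ n) {j : ℕ} (hj1 : 1 ≤ j) (hj2 : j ≤ n - 2) : ajj n j ≠ an1 n := by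
  intro h
  have hlt : j < n := by omega
  have h2 := congrFun h ⟨j, hlt⟩
  simp only [ajj, an1] at h2
  rw [if_pos trivial,
    dif_pos (show ((⟨j, hlt⟩ : Fin n)).val + 1 < n by simp; omega)] at h2
  cases h2

lemma ajj_ne_a1n (hn : 3 ≤ n) {j : ℕ} (hj1 : 1 ≤ j) (hj2 : j ≤ n - 2) : ajj n j ≠ a1n n := by
  intro h
  have hlt : j < n := by omega
  have h2 := congrFun h ⟨j, hlt⟩
  simp only [ajj, a1n] at h2
  rw [if_pos trivial,
    dif_pos (show ((⟨j, hlt⟩ : Fin n)).val ≠ 0 by simp; omega)] at h2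
  cases h2

lemma piOP_total (i : ℕ) (x : Fin n) : piOP n i x ≠ none := by simp [piOP]

lemma genG_ncard (hn : 3 ≤ n) : (genG n).ncard = 2 * n - 1 := by
  have hA : ({an1 n, a1n n} : Set (PT n)).ncard = 2 := by
    apply Set.ncard_pair
    intro h
    have h0 : (0 : ℕ) < n := by omega
    have h2 := congrFun h ⟨0, h0⟩
    simp only [an1, a1n] at h2
    rw [dif_pos (show ((⟨0, h0⟩ : Fin n)).val + 1 < n by simp; omega),
      dif_neg (show ¬ ((⟨0, h0⟩ : Fin n)).val ≠ 0 by simp)] at h2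
    cases h2
  have hBinj : Set.InjOn (ajj n) {j | 1 ≤ j ∧ j ≤ n - 2} := by
    rintro j ⟨hj1, hj2⟩ j' ⟨hj1', hj2'⟩ h
    by_contra hne
    have hlt : j < n := by omega
    have h2 := congrFun h ⟨j, hlt⟩
    simp only [ajj] at h2
    rw [if_pos trivial,
      if_neg (show ¬ ((⟨j, hlt⟩ : Fin n)).val = j' from hne)] at h2
    cases h2
  have hB : ((ajj n '' {j | 1 ≤ j ∧ j ≤ n - 2}) : Set (PT n)).ncard = n - 2 := by
    rw [Set.ncard_image_of_injOn hBinj]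
    have he : {j | 1 ≤ j ∧ j ≤ n - 2} = Set.Icc 1 (n-2) := by ext j; simp [Set.mem_Icc]
    rw [he, ncard_Icc']; omega
  have hCinj : Set.InjOn (piOP n) {i | i ≤ n - 2} := by
    rintro i (hi : i ≤ n - 2) i' (hi' : i' ≤ n - 2) h
    by_contra hne
    rcases Nat.lt_or_ge i i' with hlt | hge
    · have hl : i + 1 < n := by omega
      have h2 := congrFun h ⟨i+1, hl⟩
      simp only [piOP, Option.some.injEq, Fin.mk.injEq] at h2
      rw [if_neg (show ¬ ((⟨i+1, hl⟩ : Fin n)).val ≤ i by simp),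
        if_pos (show ((⟨i+1, hl⟩ : Fin n)).val ≤ i' by simp; omega)] at h2
      simp at h2
    · have hlt : i' < i := by omega
      have hl : i' + 1 < n := by omega
      have h2 := congrFun h ⟨i'+1, hl⟩
      simp only [piOP, Option.some.injEq, Fin.mk.injEq] at h2
      rw [if_pos (show ((⟨i'+1, hl⟩ : Fin n)).val ≤ i by simp; omega),
        if_neg (show ¬ ((⟨i'+1, hl⟩ : Fin n)).val ≤ i' by simp)] at h2
      simp at h2
  have hC : ((piOP n '' {i | i ≤ n - 2}) : Set (PT n)).ncard = n - 1 := by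
    rw [Set.ncard_image_of_injOn hCinj]
    have he : {i | i ≤ n - 2} = Set.Iic (n-2) := by ext i; simp
    rw [he, ncard_Iic']; omega
  have hdAB : Disjoint ({an1 n, a1n n} : Set (PT n)) (ajj n '' {j | 1 ≤ j ∧ j ≤ n - 2}) := by
    rw [Set.disjoint_right]
    rintro f ⟨j, ⟨hj1, hj2⟩, rfl⟩ hf
    rcases hf with hf | hf
    · exact ajj_ne_an1 hn hj1 hj2 hf
    · exact ajj_ne_a1n hn hj1 hj2 hf
  have hdC : Disjoint (({an1 n, a1n n} : Set (PT n)) ∪ ajj n '' {j | 1 ≤ j ∧ j ≤ n - 2})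
      (piOP n '' {i | i ≤ n - 2}) := by
    rw [Set.disjoint_right]
    rintro f ⟨i, (hi : i ≤ n - 2), rfl⟩ hf
    rcases hf with (hf | hf) | ⟨j, ⟨hj1, hj2⟩, hf⟩
    · have h0 : n - 1 < n := by omega
      have h2 := congrFun hf.symm ⟨n-1, h0⟩
      simp only [an1] at h2
      rw [dif_neg (show ¬ ((⟨n-1, h0⟩ : Fin n)).val + 1 < n by simp; omega)] at h2
      exact piOP_total i _ h2.symm
    · have h0 : (0:ℕ) < n := by omega
      have h2 := congrFun hf.symm ⟨0, h0⟩
      simp only [a1n] at h2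
      rw [dif_neg (show ¬ ((⟨0, h0⟩ : Fin n)).val ≠ 0 by simp)] at h2
      exact piOP_total i _ h2.symm
    · have h0 : j < n := by omega
      have h2 := congrFun hf ⟨j, h0⟩
      simp only [ajj] at h2
      rw [if_pos trivial] at h2
      exact piOP_total i _ h2.symm
  rw [genG, Set.ncard_union_eq hdC (Set.toFinite _) (Set.toFinite _),
    Set.ncard_union_eq hdAB (Set.toFinite _) (Set.toFinite _), hA, hB, hC]
  omega

end Card
section PidShift
variable {n : ℕ}

lemma an1_mem_genG : an1 n ∈ genG n :=
  Set.mem_union_left _ (Set.mem_union_left _ (Set.mem_insert _ _))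
lemma a1n_mem_genG : a1n n ∈ genG n :=
  Set.mem_union_left _ (Set.mem_union_left _ (Set.mem_insert_of_mem _ rfl))
lemma ajj_mem_genG {j : ℕ} (h1 : 1 ≤ j) (h2 : j ≤ n - 2) : ajj n j ∈ genG n :=
  Set.mem_union_left _ (Set.mem_union_right _ ⟨j, ⟨h1, h2⟩, rfl⟩)
lemma piOP_mem_genG {i : ℕ} (h : i ≤ n - 2) : piOP n i ∈ genG n :=
  Set.mem_union_right _ ⟨i, h, rfl⟩

lemma pid_single_mem (hn : 3 ≤ n) (j : Fin n) :
    pid {j} ∈ Subsemigroup.closure (genG n) := by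
  have hpid : pid ({j} : Finset (Fin n)) = fun x => if x.val = j.val then none else some x := by
    funext x
    simp only [pid, Finset.mem_singleton]
    by_cases h : x = j
    · rw [if_pos h, if_pos (by rw [h])]
    · rw [if_neg h, if_neg (by intro hv; exact h (Fin.ext hv))]
  rcases Nat.lt_or_ge j.val 1 with hj | hj
  · -- j = 0 : pid {j} = a1n * an1
    have hj0 : j.val = 0 := by omega
    have : pid ({j} : Finset (Fin n)) = a1n n * an1 n := by
      rw [hpid]; funext x
      rw [pt_mul_apply]
      by_cases h : x.val = 0
      · rw [if_pos (by omega)]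
        unfold a1n
        rw [dif_neg (by omega)]
        rfl
      · rw [if_neg (by omega)]
        unfold a1n
        rw [dif_pos (by omega)]
        rw [Option.bind_some]
        unfold an1
        have hx := x.isLt
        rw [dif_pos (by simp; omega)]
        simp only [Option.some.injEq]
        apply Fin.ext
        simp; omega
    rw [this]
    exact mul_mem (Subsemigroup.subset_closure a1n_mem_genG)
      (Subsemigroup.subset_closure an1_mem_genG)
  rcases Nat.lt_or_ge j.val (n-1) with hj2 | hj2
  · -- 1 ≤ j ≤ n-2 : generator
    have : pid ({j} : Finset (Fin n)) = ajj n j.val := by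
      rw [hpid]; funext x; rfl
    rw [this]
    exact Subsemigroup.subset_closure (ajj_mem_genG hj (by omega))
  · -- j = n-1 : pid {j} = an1 * a1n
    have hjn : j.val = n - 1 := by have := j.isLt; omega
    have : pid ({j} : Finset (Fin n)) = an1 n * a1n n := by
      rw [hpid]; funext x
      rw [pt_mul_apply]
      by_cases h : x.val = n - 1
      · rw [if_pos (by omega)]
        unfold an1
        rw [dif_neg (by omega)]
        rfl
      · have hx := x.isLt
        rw [if_neg (by omega)]
        unfold an1
        rw [dif_pos (by omega)]
        rw [Option.bind_some]
        unfold a1n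
        rw [dif_pos (by simp)]
        simp only [Option.some.injEq]
        apply Fin.ext
        simp
    rw [this]
    exact mul_mem (Subsemigroup.subset_closure an1_mem_genG)
      (Subsemigroup.subset_closure a1n_mem_genG)

lemma pid_mem (hn : 3 ≤ n) (C : Finset (Fin n)) (hC : C.Nonempty) :
    pid C ∈ Subsemigroup.closure (genG n) := by
  induction hC using Finset.Nonempty.cons_induction with
  | singleton j => exact pid_single_mem hn j
  | cons a s ha hs ih =>
    have : pid (Finset.cons a s ha) = pid {a} * pid s := by
      funext x
      rw [pt_mul_apply]
      simp only [pid, Finset.mem_cons, Finset.mem_singleton]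
      by_cases h1 : x = a
      · rw [if_pos (Or.inl h1), if_pos h1]; rfl
      · rw [if_neg h1]
        show _ = pid s x
        unfold pid
        by_cases h2 : x ∈ s
        · rw [if_pos (Or.inr h2), if_pos h2]
        · rw [if_neg (by tauto), if_neg h2]
    rw [this]
    exact mul_mem (pid_single_mem hn a) ih

/-- x ↦ x + a -/
def shiftPT (n a : ℕ) : PT n := fun x => if h : x.val + a < n then some ⟨x.val + a, h⟩ else none

lemma shiftPT_mem (hn : 3 ≤ n) {a : ℕ} (ha : 1 ≤ a) :
    shiftPT n a ∈ Subsemigroup.closure (genG n) := by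
  induction a with
  | zero => omega
  | succ a ih =>
    rcases Nat.lt_or_ge a 1 with h1 | h1
    · have : a = 0 := by omega
      subst this
      have : shiftPT n 1 = an1 n := rfl
      rw [this]
      exact Subsemigroup.subset_closure an1_mem_genG
    · have heq : shiftPT n (a+1) = shiftPT n a * an1 n := by
        funext x
        rw [pt_mul_apply]
        unfold shiftPT an1
        by_cases h : x.val + a < n
        · rw [dif_pos h]
          show _ = if h : _ then _ else _
          by_cases h2 : x.val + (a+1) < n
          · rw [dif_pos h2, dif_pos (by simp; omega)]
            simp only [Option.some.injEq]
            apply Fin.ext; simp; omega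
          · rw [dif_neg h2, dif_neg (by simp; omega)]
        · rw [dif_neg h, dif_neg (by omega)]
          rfl
      rw [heq]
      exact mul_mem (ih h1) (Subsemigroup.subset_closure an1_mem_genG)

end PidShift
section LemA
variable {n : ℕ}

lemma lemA (hn : 3 ≤ n) : ∀ (k : ℕ), 1 ≤ k → ∀ G : ℕ → ℕ,
    (∀ x, x + 1 < n → G (x+1) = G x ∨ G (x+1) = G x + 1) →
    G 0 = 0 → G (n-1) + k = n - 1 →
    ofFun (fun x : Fin n => G x.val) ∈ Subsemigroup.closure (genG n) := by
  intro k
  induction k with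
  | zero => intro h; omega
  | succ k ih =>
    intro _ G hstep h0 hend
    have hmono : ∀ x d, x + d ≤ n - 1 → G x ≤ G (x + d) ∧ G (x + d) ≤ G x + d := by
      intro x d
      induction d with
      | zero => intro _; simp
      | succ d ihd =>
        intro h
        have h1 := ihd (by omega)
        have h2 := hstep (x+d) (by omega)
        have hxd : x + (d+1) = (x+d)+1 := by omega
        rw [hxd]
        omega
    have hle : ∀ x, x ≤ n - 1 → G x ≤ x := by
      intro x hx
      have := (hmono 0 x (by omega)).2
      rw [Nat.zero_add] at this
      omega
    have hex : ∃ t, 0 < t ∧ t < n ∧ G t = G (t-1) := by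
      by_contra hno
      push_neg at hno
      have hall : ∀ t, t ≤ n - 1 → G t = t := by
        intro t
        induction t with
        | zero => intro _; exact h0
        | succ t iht =>
          intro ht
          have hst := hstep t (by omega)
          have h2 := hno (t+1) (by omega) (by omega)
          have h2' : G (t+1) ≠ G t := by simpa using h2
          have h3 := iht (by omega)
          omega
      have := hall (n-1) (by omega)
      omega
    set s := Nat.find hex with hs_def
    obtain ⟨hs0, hsn, hsflat⟩ : 0 < s ∧ s < n ∧ G s = G (s-1) := Nat.find_spec hex
    have hsmin : ∀ t, t < s → ¬(0 < t ∧ t < n ∧ G t = G (t-1)) :=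
      fun t ht => Nat.find_min hex ht
    have hbelow : ∀ x, x < s → G x = x := by
      intro x
      induction x with
      | zero => intro _; exact h0
      | succ x ihx =>
        intro hx
        have hx' := ihx (by omega)
        have hst := hstep x (by omega)
        have hne : G (x+1) ≠ G x := by
          intro he
          exact absurd ⟨by omega, by omega, by simpa using he⟩ (hsmin (x+1) hx)
        omega
    rcases Nat.lt_or_ge k 1 with hk | hk
    · -- base case: exactly one flat step, equals piOP (s-1)
      have hk0 : k = 0 := by omega
      subst hk0
      have habove : ∀ x, s ≤ x → x ≤ n-1 → G x = x - 1 := by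
        intro x hsx hxn
        have hb := hbelow (s-1) (by omega)
        have h2 := hmono s (x - s) (by omega)
        have hxs : s + (x - s) = x := by omega
        rw [hxs] at h2
        have h3 := hmono x ((n-1) - x) (by omega)
        have hxn' : x + ((n-1) - x) = n-1 := by omega
        rw [hxn'] at h3
        omega
      have heq : ofFun (fun x : Fin n => G x.val) = piOP n (s-1) := by
        funext x
        have hx := x.isLt
        have hgx : G x.val < n := by have := hle x.val (by omega); omega
        unfold ofFun piOP
        rw [dif_pos hgx]
        simp only [Option.some.injEq]
        apply Fin.ext
        show G x.val = if x.val ≤ s - 1 then x.val else x.val - 1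
        rcases Nat.lt_or_ge x.val s with h | h
        · rw [hbelow x.val h, if_pos (by omega)]
        · rw [habove x.val h (by omega), if_neg (by omega)]
      rw [heq]
      exact Subsemigroup.subset_closure (piOP_mem_genG (by omega))
    · -- inductive step: peel off the least flat step
      set G' : ℕ → ℕ := fun x => if x + 1 = n then G (n-1) + 1
        else if x < s then G x else G (x+1) with hG'
      have hG'at : ∀ x, G' x = if x + 1 = n then G (n-1) + 1
          else if x < s then G x else G (x+1) := fun x => rfl
      have hstep' : ∀ x, x + 1 < n → G' (x+1) = G' x ∨ G' (x+1) = G' x + 1 := by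
        intro x hx1
        by_cases htop : x + 1 + 1 = n
        · -- x + 1 = n - 1
          have eL : G' (x+1) = G (n-1) + 1 := by rw [hG'at (x+1), if_pos htop]
          by_cases hxs : x < s
          · have hsx : s = n - 1 := by omega
            have eR : G' x = G x := by
              rw [hG'at x, if_neg (show ¬ (x + 1 = n) by omega), if_pos hxs]
            have e3 := hsflat
            rw [hsx] at e3
            have e4 : n - 1 - 1 = x := by omega
            rw [e4] at e3
            rw [eL, eR]
            right
            omega
          · have eR : G' x = G (x+1) := by
              rw [hG'at x, if_neg (show ¬ (x + 1 = n) by omega), if_neg hxs]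
            have e4 : x + 1 = n - 1 := by omega
            right
            rw [eL, eR, e4]
        · have eL : G' (x+1) = if x + 1 < s then G (x+1) else G (x+1+1) := by
            rw [hG'at (x+1), if_neg htop]
          have eR : G' x = if x < s then G x else G (x+1) := by
            rw [hG'at x, if_neg (show ¬ (x + 1 = n) by omega)]
          rw [eL, eR]
          by_cases h1 : x + 1 < s
          · rw [if_pos h1, if_pos (by omega)]
            exact hstep x (by omega)
          · rw [if_neg h1]
            by_cases hx2 : x < s
            · rw [if_pos hx2]
              have hx1s : x + 1 = s := by omega
              have e3 := hsflat
              rw [← hx1s] at e3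
              have e5 : x + 1 - 1 = x := by omega
              rw [e5] at e3
              have := hstep (x+1) (by omega)
              omega
            · rw [if_neg hx2]
              exact hstep (x+1) (by omega)
      have h0' : G' 0 = 0 := by
        rw [hG'at 0, if_neg (by omega), if_pos (by omega)]
        exact h0
      have hend' : G' (n-1) + k = n - 1 := by
        rw [hG'at (n-1), if_pos (by omega)]
        omega
      have hmem' := ih hk G' hstep' h0' hend'
      -- bound for G'
      have hle' : ∀ x, x ≤ n - 1 → G' x < n := by
        intro x hx
        rw [hG'at x]
        split
        · omega
        · split
          · have := hle x (by omega); omega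
          · have := hle (x+1) (by omega); omega
      have heq : ofFun (fun x : Fin n => G x.val) = piOP n (s-1) * ofFun (fun x : Fin n => G' x.val) := by
        funext x
        have hx := x.isLt
        rw [pt_mul_apply]
        unfold piOP
        rw [Option.bind_some]
        set v : ℕ := if x.val ≤ s - 1 then x.val else x.val - 1 with hv
        have hvn2 : v ≤ n - 2 := by rw [hv]; split <;> omega
        have hG'v : G' v = G x.val := by
          rw [hG'at v]
          rw [if_neg (by omega)]
          rcases Nat.lt_or_ge x.val s with hlt | hge
          · have hvx : v = x.val := by rw [hv, if_pos (by omega)]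
            rw [hvx, if_pos (by omega)]
          · have hvx : v = x.val - 1 := by rw [hv, if_neg (by omega)]
            rcases Nat.lt_or_ge v s with h2 | h2
            · -- v = s-1, x = s
              have hxs : x.val = s := by omega
              rw [if_pos h2]
              have : v = s - 1 := by omega
              rw [this, hxs]
              omega
            · rw [if_neg (by omega)]
              congr 1
              omega
        show (ofFun fun x : Fin n => G x.val) x = (ofFun fun x : Fin n => G' x.val) _
        unfold ofFun
        have hgx : G x.val < n := by have := hle x.val (by omega); omega
        rw [dif_pos hgx, dif_pos (show G' v < n from hle' v (by omega))]
        simp only [Option.some.injEq]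
        apply Fin.ext
        show G x.val = G' v
        rw [hG'v]
      rw [heq]
      exact mul_mem (Subsemigroup.subset_closure (piOP_mem_genG (by omega))) hmem'

end LemA
section LemB
variable {n : ℕ}

lemma lemB (hn : 3 ≤ n) (G : ℕ → ℕ)
    (hstep : ∀ x, x + 1 < n → G (x+1) = G x ∨ G (x+1) = G x + 1)
    (htop : G (n-1) ≤ n - 1)
    (hspan : G (n-1) < G 0 + (n - 1)) :
    ofFun (fun x : Fin n => G x.val) ∈ Subsemigroup.closure (genG n) := by
  have hmono : ∀ x d, x + d ≤ n - 1 → G x ≤ G (x + d) ∧ G (x + d) ≤ G x + d := by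
    intro x d
    induction d with
    | zero => intro _; simp
    | succ d ihd =>
      intro h
      have h1 := ihd (by omega)
      have h2 := hstep (x+d) (by omega)
      have hxd : x + (d+1) = (x+d)+1 := by omega
      rw [hxd]
      omega
  have hlo : ∀ x, x ≤ n - 1 → G 0 ≤ G x ∧ G x ≤ G (n-1) := by
    intro x hx
    have h1 := (hmono 0 x (by omega)).1
    rw [Nat.zero_add] at h1
    have h2 := hmono x ((n-1) - x) (by omega)
    have he : x + ((n-1) - x) = n - 1 := by omega
    rw [he] at h2
    exact ⟨h1, h2.1⟩
  set a := G 0 with ha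
  set G2 : ℕ → ℕ := fun x => G x - a with hG2
  have hG2at : ∀ x, G2 x = G x - a := fun _ => rfl
  have hstep2 : ∀ x, x + 1 < n → G2 (x+1) = G2 x ∨ G2 (x+1) = G2 x + 1 := by
    intro x hx
    have h1 := hstep x hx
    have h2 := (hlo x (by omega)).1
    have h3 := (hlo (x+1) (by omega)).1
    rw [hG2at, hG2at]
    omega
  have h02 : G2 0 = 0 := by rw [hG2at]; omega
  have hk : G2 (n-1) + ((n-1) - G2 (n-1)) = n - 1 := by
    rw [hG2at]
    have := (hlo 0 (by omega)).2
    omega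
  have hk1 : 1 ≤ (n-1) - G2 (n-1) := by
    rw [hG2at]
    omega
  have hmem2 := lemA hn ((n-1) - G2 (n-1)) hk1 G2 hstep2 h02 hk
  rcases Nat.eq_zero_or_pos a with ha0 | ha1
  · have : (fun x : Fin n => G2 x.val) = (fun x : Fin n => G x.val) := by
      funext x
      rw [hG2at]
      omega
    rw [this] at hmem2
    exact hmem2
  · have heq : ofFun (fun x : Fin n => G x.val) = ofFun (fun x : Fin n => G2 x.val) * shiftPT n a := by
      funext x
      have hx := x.isLt
      have hbx : G x.val ≤ n - 1 := le_trans (hlo x.val (by omega)).2 htop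
      have hax : a ≤ G x.val := (hlo x.val (by omega)).1
      rw [pt_mul_apply]
      unfold ofFun
      rw [dif_pos (show G x.val < n by omega), dif_pos (show G2 x.val < n by rw [hG2at]; omega)]
      rw [Option.bind_some]
      unfold shiftPT
      have h1 : G2 x.val + a < n := by rw [hG2at]; omega
      rw [dif_pos h1]
      simp only [Option.some.injEq]
      apply Fin.ext
      show G x.val = G2 x.val + a
      rw [hG2at]
      omega
    rw [heq]
    exact mul_mem hmem2 (shiftPT_mem hn ha1)

end LemB
section Hard
variable {n : ℕ}

lemma hard_dir (hn : 3 ≤ n) (f : PT n) (hf : IsOP f) (hc : IsContraction f)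
    (him : (im f).ncard ≤ n - 1) : f ∈ Subsemigroup.closure (genG n) := by
  by_cases hid : ∀ x a, f x = some a → a = x
  · -- f is a restriction of the identity
    set C : Finset (Fin n) := Finset.univ.filter (fun x => f x = none) with hC
    have hCmem : ∀ x : Fin n, x ∈ C ↔ f x = none := by
      intro x; rw [hC]; simp
    have hCne : C.Nonempty := by
      rw [Finset.nonempty_iff_ne_empty]
      intro hEmpty
      have hall : ∀ x, f x = some x := by
        intro x
        cases hfx : f x with
        | none =>
          exfalso
          have : x ∈ C := (hCmem x).2 hfx
          rw [hEmpty] at this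
          exact absurd this (Finset.notMem_empty x)
        | some a => exact congrArg some (hid x a hfx)
      have huniv : im f = Set.univ := Set.eq_univ_of_forall (fun y => ⟨y, hall y⟩)
      rw [huniv, Set.ncard_univ, Nat.card_eq_fintype_card, Fintype.card_fin] at him
      omega
    have hfeq : f = pid C := by
      funext x
      unfold pid
      by_cases hx : x ∈ C
      · rw [if_pos hx]; exact (hCmem x).1 hx
      · rw [if_neg hx]
        cases hfx : f x with
        | none => exact absurd ((hCmem x).2 hfx) hx
        | some a => exact congrArg some (hid x a hfx)
    rw [hfeq]
    exact pid_mem hn C hCne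
  · push_neg at hid
    obtain ⟨x₀, v₀, hfx₀, hv₀⟩ := hid
    have hv₀' : v₀.val ≠ x₀.val := fun h => hv₀ (Fin.ext h)
    set fv : Fin n → ℕ := fun d => ((f d).map Fin.val).getD 0 with hfv
    have hfv_some : ∀ d w, f d = some w → fv d = w.val := by
      intro d w hd; rw [hfv]; simp [hd]
    have hfv_none : ∀ d, f d = none → fv d = 0 := by
      intro d hd; rw [hfv]; simp [hd]
    have hfv_le : ∀ d, fv d ≤ n - 1 := by
      intro d
      cases hfd : f d with
      | none => rw [hfv_none d hfd]; omega
      | some w => rw [hfv_some d w hfd]; have := w.isLt; omega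
    set G : ℕ → ℕ := fun x => Finset.univ.sup (fun d : Fin n => fv d - (d.val - x)) with hG
    have hGat : ∀ x, G x = Finset.univ.sup (fun d : Fin n => fv d - (d.val - x)) :=
      fun _ => rfl
    have hG_le : ∀ x c, (∀ d : Fin n, fv d - (d.val - x) ≤ c) → G x ≤ c := by
      intro x c h
      rw [hGat]
      exact Finset.sup_le (fun d _ => h d)
    have hG_ge : ∀ x (d : Fin n), fv d - (d.val - x) ≤ G x := by
      intro x d
      rw [hGat]
      exact Finset.le_sup (f := fun d : Fin n => fv d - (d.val - x)) (Finset.mem_univ d)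
    have hstep : ∀ x, x + 1 < n → G (x+1) = G x ∨ G (x+1) = G x + 1 := by
      intro x hx
      have h1 : G x ≤ G (x+1) := by
        apply hG_le
        intro d
        exact le_trans (by omega) (hG_ge (x+1) d)
      have h2 : G (x+1) ≤ G x + 1 := by
        apply hG_le
        intro d
        have := hG_ge x d
        omega
      omega
    have hext : ∀ (x v : Fin n), f x = some v → G x.val = v.val := by
      intro x v hx
      apply le_antisymm
      · apply hG_le
        intro d
        cases hfd : f d with
        | none => rw [hfv_none d hfd]; omega
        | some w =>
          rw [hfv_some d w hfd]
          rcases le_or_gt d.val x.val with hdx | hdx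
          · have hle : w ≤ v := hf d x w v hfd hx (by rwa [Fin.le_def])
            rw [Fin.le_def] at hle
            omega
          · have hdist := hc d x w v hfd hx
            simp [Nat.dist] at hdist
            omega
      · have := hG_ge x.val x
        rw [hfv_some x v hx] at this
        omega
    have htop : G (n-1) ≤ n - 1 := by
      apply hG_le
      intro d
      have := hfv_le d
      omega
    have hspan : G (n-1) < G 0 + (n - 1) := by
      by_contra hno
      push_neg at hno
      have hG0 : G 0 = 0 := by omega
      have hGtop : G (n-1) = n - 1 := by omega
      -- find d1 attaining the sup at n-1
      have hune : (Finset.univ : Finset (Fin n)).Nonempty :=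
        ⟨⟨0, by omega⟩, Finset.mem_univ _⟩
      obtain ⟨d1, _, hd1⟩ := Finset.exists_mem_eq_sup (Finset.univ : Finset (Fin n))
        hune (fun d : Fin n => fv d - (d.val - (n-1)))
      rw [← hGat (n-1), hGtop] at hd1
      have hd1n : d1.val ≤ n - 1 := by have := d1.isLt; omega
      have hfvd1 : fv d1 = n - 1 := by omega
      cases hfd1 : f d1 with
      | none => rw [hfv_none d1 hfd1] at hfvd1; omega
      | some w1 =>
        rw [hfv_some d1 w1 hfd1] at hfvd1
        -- G 0 = 0 gives fv d ≤ d for all d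
        have hvx₀ : v₀.val ≤ x₀.val := by
          have := hG_ge 0 x₀
          rw [hfv_some x₀ v₀ hfx₀, hG0] at this
          omega
        have hvlt : v₀.val < x₀.val := by omega
        rcases le_or_gt d1.val x₀.val with hcase | hcase
        · have hle : w1 ≤ v₀ := hf d1 x₀ w1 v₀ hfd1 hfx₀ (by rwa [Fin.le_def])
          rw [Fin.le_def] at hle
          have := x₀.isLt
          omega
        · have hdist := hc d1 x₀ w1 v₀ hfd1 hfx₀
          simp [Nat.dist] at hdist
          have := d1.isLt
          have := v₀.isLt
          omega
    have hGmem := lemB hn G hstep htop hspan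
    -- assemble
    set C : Finset (Fin n) := Finset.univ.filter (fun x => f x = none) with hC
    have hCmem : ∀ x : Fin n, x ∈ C ↔ f x = none := by
      intro x; rw [hC]; simp
    by_cases hCe : C = ∅
    · have hfeq : f = ofFun (fun x : Fin n => G x.val) := by
        funext x
        cases hfx : f x with
        | none =>
          exfalso
          have : x ∈ C := (hCmem x).2 hfx
          rw [hCe] at this
          exact absurd this (Finset.notMem_empty x)
        | some v =>
          unfold ofFun
          have hGx : G x.val = v.val := hext x v hfx
          rw [dif_pos (show G x.val < n by rw [hGx]; exact v.isLt)]
          simp only [Option.some.injEq]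
          exact (Fin.ext hGx.symm)
      rw [hfeq]
      exact hGmem
    · have hfeq : f = pid C * ofFun (fun x : Fin n => G x.val) := by
        funext x
        rw [pt_mul_apply]
        unfold pid
        by_cases hx : x ∈ C
        · rw [if_pos hx, Option.bind_none]
          exact (hCmem x).1 hx
        · rw [if_neg hx, Option.bind_some]
          cases hfx : f x with
          | none => exact absurd ((hCmem x).2 hfx) hx
          | some v =>
            unfold ofFun
            have hGx : G x.val = v.val := hext x v hfx
            rw [dif_pos (show G x.val < n by rw [hGx]; exact v.isLt)]
            simp only [Option.some.injEq]
            exact (Fin.ext hGx.symm)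
      rw [hfeq]
      exact mul_mem (pid_mem hn C (Finset.nonempty_iff_ne_empty.2 hCe)) hGmem

end Hard

theorem stmt_11' {n : ℕ} (hn : 3 ≤ n) :
    (genG n).ncard = 2 * n - 1 ∧
      (Subsemigroup.closure (genG n) : Set (PT n)) =
        {f : PT n | IsOP f ∧ IsContraction f ∧ (im f).ncard ≤ n - 1} := by
  refine ⟨genG_ncard hn, Set.Subset.antisymm ?_ ?_⟩
  · intro f hf
    exact (Subsemigroup.closure_le.2 (genG_subset_SOCP hn)) hf
  · rintro f ⟨h1, h2, h3⟩
    exact hard_dir hn f h1 h2 h3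

/-- for `n ≥ 3`, `G` has `2n-1` elements and generates
`⟨K_{n-1}⟩ = OCP_{n,n-1}`. -/
theorem stmt_11 {n : ℕ} (hn : 3 ≤ n) :
    (genG n).ncard = 2 * n - 1 ∧
      (Subsemigroup.closure (genG n) : Set (PT n)) =
        {f : PT n | IsOP f ∧ IsContraction f ∧ (im f).ncard ≤ n - 1} := stmt_11' hn
end

section
/- For n ≥ 3, any generating set of the semigroup OCP_{n,n−1} = {α ∈ OCP_n : |im α| ≤ n−1} has at least 2n−1 elements; i.e., rank(OCP_{n,n−1}) ≥ 2n−1. (The set K_{n−1} of elements of image size n−1 falls into exactly 2n−1 distinct kernel classes, and no product of two elements of OCP_{n,n−1} can have image size n−1 with a kernel different from that of its first factor's restriction, so each kernel class needs a representative.) -/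
/- ------------------ auxiliary material ------------------ -/

lemma PT.mul_apply {n : ℕ} (f g : PT n) (x : Fin n) : (f * g) x = (f x).bind g := rfl

/-- The partial identity on `[n] \ {s}`. -/
def eP (n : ℕ) (s : Fin n) : PT n := fun x => if x = s then none else some x

def tv (i x : ℕ) : ℕ := if x ≤ i then x else x - 1

lemma tv_le (i x : ℕ) : tv i x ≤ x := by unfold tv; split <;> omega

/-- The total map merging `i` and `i+1`. -/
def tP (n i : ℕ) : PT n :=
  fun x => some ⟨tv i x.val, lt_of_le_of_lt (tv_le i x.val) x.isLt⟩

lemma tv_eq {i x y : ℕ} (h : tv i x = tv i y) :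
    x = y ∨ (x = i ∧ y = i + 1) ∨ (x = i + 1 ∧ y = i) := by
  unfold tv at h; split at h <;> split at h <;> omega

/-- "Same kernel as `eP n s`". -/
def Pe {n : ℕ} (s : Fin n) (a : PT n) : Prop :=
  a s = none ∧ ∀ x, x ≠ s → (a x).isSome

/-- "Same kernel as `tP n i`". -/
def Pt {n : ℕ} (i : ℕ) (a : PT n) : Prop :=
  (∀ x, (a x).isSome) ∧
  (∀ x y : Fin n, x.val = i → y.val = i + 1 → a x = a y) ∧
  (∀ x y : Fin n, a x = a y →
    x = y ∨ (x.val = i ∧ y.val = i + 1) ∨ (x.val = i + 1 ∧ y.val = i))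

lemma ncard_compl_singleton {n : ℕ} (z : Fin n) :
    ({z}ᶜ : Set (Fin n)).ncard = n - 1 := by
  have h : ({z}ᶜ : Set (Fin n)) = Set.univ \ {z} := by simp [Set.compl_eq_univ_diff]
  rw [h, Set.ncard_diff_singleton_of_mem (Set.mem_univ z), Set.ncard_univ,
    Nat.card_eq_fintype_card, Fintype.card_fin]

lemma ncard_le_of_avoid {n : ℕ} (f : PT n) (z : Fin n)
    (h : ∀ y ∈ im f, y ≠ z) : (im f).ncard ≤ n - 1 := by
  have hsub : im f ⊆ ({z}ᶜ : Set (Fin n)) := fun y hy => h y hy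
  calc (im f).ncard ≤ ({z}ᶜ : Set (Fin n)).ncard :=
        Set.ncard_le_ncard hsub (Set.toFinite _)
    _ = n - 1 := ncard_compl_singleton z

/-- A total partial map with small image has a collision. -/
lemma exists_collision {n : ℕ} (hn : 1 ≤ n) {a : PT n} (htot : ∀ x, (a x).isSome)
    (him : (im a).ncard ≤ n - 1) : ∃ x y, x ≠ y ∧ a x = a y := by
  by_contra hcon
  push_neg at hcon
  have hsome : ∀ x, a x = some ((a x).get (htot x)) := fun x =>
    (Option.some_get (htot x)).symm
  set g : Fin n → Fin n := fun x => (a x).get (htot x) with hg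
  have hginj : Function.Injective g := by
    intro x y hxy
    by_contra hne
    exact hcon x y hne (by rw [hsome x, hsome y]; exact congrArg some hxy)
  have hsurj : Function.Surjective g := Finite.surjective_of_injective hginj
  have him_eq : im a = Set.range g := by
    ext y
    constructor
    · rintro ⟨x, hx⟩
      refine ⟨x, ?_⟩
      rw [hsome x] at hx
      exact Option.some.inj hx
    · rintro ⟨x, rfl⟩
      exact ⟨x, hsome x⟩
  have : (im a).ncard = n := by
    rw [him_eq, Set.range_eq_univ.2 hsurj, Set.ncard_univ, Nat.card_eq_fintype_card,
      Fintype.card_fin]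
  omega

/-- Key lemma: first factor of `eP n s` must have the same kernel. -/
lemma factor_e {n : ℕ} (hn : 1 ≤ n) {s : Fin n} {a w : PT n}
    (him : (im a).ncard ≤ n - 1) (h : a * w = eP n s) : Pe s a := by
  have happ : ∀ x, (a x).bind w = eP n s x := fun x => congrFun h x
  have key : ∀ z, z ≠ s → (a z).bind w = some z := by
    intro z hz
    have := happ z
    rwa [eP, if_neg hz] at this
  have keys : (a s).bind w = none := by
    have := happ s
    rwa [eP, if_pos rfl] at this
  have h2 : ∀ x, x ≠ s → (a x).isSome := by
    intro x hx
    have hb := key x hx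
    cases hax : a x with
    | none => rw [hax] at hb; simp at hb
    | some v => simp [hax]
  refine ⟨?_, h2⟩
  by_contra hs
  have hssome : (a s).isSome := Option.ne_none_iff_isSome.1 hs
  have htot : ∀ x, (a x).isSome := by
    intro x
    by_cases hx : x = s
    · rw [hx]; exact hssome
    · exact h2 x hx
  obtain ⟨x, y, hxy, heq⟩ := exists_collision hn htot him
  by_cases hxs : x = s
  · have hys : y ≠ s := fun hc => hxy (hxs.trans hc.symm)
    have h1 := key y hys
    rw [← heq, hxs, keys] at h1
    cases h1
  · by_cases hys : y = s
    · subst hys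
      have h1 := key x hxs
      rw [heq, keys] at h1
      cases h1
    · have h1 := key x hxs
      have h2' := key y hys
      rw [heq] at h1
      rw [h1] at h2'
      exact hxy (Option.some.inj h2')

/-- Key lemma: first factor of `tP n i` must have the same kernel. -/
lemma factor_t {n : ℕ} {i : ℕ} (hi : i + 2 ≤ n) {a w : PT n}
    (him : (im a).ncard ≤ n - 1) (h : a * w = tP n i) : Pt i a := by
  have happ : ∀ x, (a x).bind w = tP n i x := fun x => congrFun h x
  have htot : ∀ x, (a x).isSome := by
    intro x
    have hb := happ x
    cases hax : a x with
    | none => rw [hax] at hb; rw [tP] at hb; simp at hb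
    | some v => simp [hax]
  have hc3 : ∀ x y : Fin n, a x = a y →
      x = y ∨ (x.val = i ∧ y.val = i + 1) ∨ (x.val = i + 1 ∧ y.val = i) := by
    intro x y hxy
    have h1 := happ x
    have h2 := happ y
    rw [hxy, h2] at h1
    rw [tP] at h1
    have hv : tv i y.val = tv i x.val := congrArg Fin.val (Option.some.inj h1)
    rcases tv_eq hv.symm with h' | h' | h'
    · exact Or.inl (Fin.ext h')
    · exact Or.inr (Or.inl h')
    · exact Or.inr (Or.inr h')
  refine ⟨htot, ?_, hc3⟩
  obtain ⟨x, y, hxy, heq⟩ := exists_collision (by omega) htot him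
  rcases hc3 x y heq with h' | h' | h'
  · exact absurd h' hxy
  · intro x' y' hx' hy'
    have hx'' : x' = x := Fin.ext (by omega)
    have hy'' : y' = y := Fin.ext (by omega)
    rw [hx'', hy'']; exact heq
  · intro x' y' hx' hy'
    have hx'' : x' = y := Fin.ext (by omega)
    have hy'' : y' = x := Fin.ext (by omega)
    rw [hx'', hy'']; exact heq.symm

lemma eP_mem {n : ℕ} (hn : 1 ≤ n) (s : Fin n) :
    IsOP (eP n s) ∧ IsContraction (eP n s) ∧ (im (eP n s)).ncard ≤ n - 1 := by
  refine ⟨?_, ?_, ?_⟩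
  · intro x y a b hx hy hxy
    rw [eP] at hx hy
    split at hx
    · exact absurd hx (by simp)
    · split at hy
      · exact absurd hy (by simp)
      · rw [← Option.some.inj hx, ← Option.some.inj hy]; exact hxy
  · intro x y a b hx hy
    rw [eP] at hx hy
    split at hx
    · exact absurd hx (by simp)
    · split at hy
      · exact absurd hy (by simp)
      · rw [← Option.some.inj hx, ← Option.some.inj hy]
  · apply ncard_le_of_avoid _ s
    rintro y ⟨x, hx⟩
    rw [eP] at hx
    split at hx
    · exact absurd hx (by simp)
    · rw [← Option.some.inj hx]; assumption

lemma tP_mem {n : ℕ} {i : ℕ} (hi : i + 2 ≤ n) :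
    IsOP (tP n i) ∧ IsContraction (tP n i) ∧ (im (tP n i)).ncard ≤ n - 1 := by
  refine ⟨?_, ?_, ?_⟩
  · intro x y a b hx hy hxy
    rw [tP] at hx hy
    rw [← Option.some.inj hx, ← Option.some.inj hy]
    have : x.val ≤ y.val := hxy
    show tv i x.val ≤ tv i y.val
    unfold tv; split <;> split <;> omega
  · intro x y a b hx hy
    rw [tP] at hx hy
    rw [← Option.some.inj hx, ← Option.some.inj hy]
    show Nat.dist (tv i x.val) (tv i y.val) ≤ Nat.dist x.val y.val
    simp only [Nat.dist, tv]
    split <;> split <;> omega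
  · apply ncard_le_of_avoid _ ⟨n - 1, by omega⟩
    rintro y ⟨x, hx⟩
    rw [tP] at hx
    have hv : tv i x.val = y.val := congrArg Fin.val (Option.some.inj hx)
    intro hcon
    have : y.val = n - 1 := congrArg Fin.val hcon
    have hxlt : x.val < n := x.isLt
    unfold tv at hv
    split at hv <;> omega

lemma closure_decomp {M : Type*} [Semigroup M] {A : Set M} {f : M}
    (hf : f ∈ Subsemigroup.closure A) :
    f ∈ A ∨ ∃ a ∈ A, ∃ w ∈ Subsemigroup.closure A, f = a * w := by
  induction hf using Subsemigroup.closure_induction with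
  | mem x hx => exact Or.inl hx
  | mul x y hx hy ihx ihy =>
    rcases ihx with h | ⟨a, haA, u, hu, rfl⟩
    · exact Or.inr ⟨x, h, y, hy, rfl⟩
    · exact Or.inr ⟨a, haA, u * y, mul_mem hu hy, mul_assoc a u y⟩

/-- any generating set of `OCP_{n,n-1}` has at least `2n-1` elements. -/
theorem stmt_12 {n : ℕ} (hn : 3 ≤ n) (A : Set (PT n))
    (hA : (Subsemigroup.closure A : Set (PT n)) =
      {f : PT n | IsOP f ∧ IsContraction f ∧ (im f).ncard ≤ n - 1}) :
    2 * n - 1 ≤ A.ncard := by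
  have hmem : ∀ f : PT n, f ∈ Subsemigroup.closure A ↔
      (IsOP f ∧ IsContraction f ∧ (im f).ncard ≤ n - 1) := by
    intro f
    constructor
    · intro h; have := hA ▸ (show f ∈ (Subsemigroup.closure A : Set (PT n)) from h); exact this
    · intro h; have : f ∈ {f : PT n | IsOP f ∧ IsContraction f ∧ (im f).ncard ≤ n - 1} := h
      rw [← hA] at this; exact this
  -- for each s : Fin n, get an element of A with kernel of eP n s
  have keyE : ∀ s : Fin n, ∃ a ∈ A, Pe s a := by
    intro s
    have hcl : eP n s ∈ Subsemigroup.closure A := (hmem _).2 (eP_mem (by omega) s)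
    rcases closure_decomp hcl with h | ⟨a, haA, w, hw, heq⟩
    · refine ⟨eP n s, h, ?_, ?_⟩
      · rw [eP, if_pos rfl]
      · intro x hx; rw [eP, if_neg hx]; rfl
    · have haS := (hmem a).1 (Subsemigroup.subset_closure haA)
      exact ⟨a, haA, factor_e (by omega) haS.2.2 heq.symm⟩
  have keyT : ∀ i : Fin (n - 1), ∃ a ∈ A, Pt i.val a := by
    intro i
    have hi2 : i.val + 2 ≤ n := by have := i.isLt; omega
    have hcl : tP n i.val ∈ Subsemigroup.closure A := (hmem _).2 (tP_mem hi2)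
    rcases closure_decomp hcl with h | ⟨a, haA, w, hw, heq⟩
    · refine ⟨tP n i.val, h, fun x => rfl, ?_, ?_⟩
      · intro x y hx hy
        rw [tP, tP]
        congr 1
        apply Fin.ext
        show tv i.val x.val = tv i.val y.val
        unfold tv; split <;> split <;> omega
      · intro x y hxy
        rw [tP, tP] at hxy
        have hv : tv i.val x.val = tv i.val y.val := congrArg Fin.val (Option.some.inj hxy)
        rcases tv_eq hv with h' | h' | h'
        · exact Or.inl (Fin.ext h')
        · exact Or.inr (Or.inl h')
        · exact Or.inr (Or.inr h')
    · have haS := (hmem a).1 (Subsemigroup.subset_closure haA)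
      exact ⟨a, haA, factor_t hi2 haS.2.2 heq.symm⟩
  choose We hWeA hWeP using keyE
  choose Wt hWtA hWtP using keyT
  set F : Fin n ⊕ Fin (n - 1) → PT n := Sum.elim We Wt with hF
  have hinj : Function.Injective F := by
    rintro (s | i) (s' | i') h
    · simp only [hF, Sum.elim_inl] at h
      by_contra hne
      have hne' : s ≠ s' := fun hc => hne (by rw [hc])
      have p1 := hWeP s
      have p2 := hWeP s'
      rw [h] at p1
      have hsome := p2.2 s hne'
      rw [p1.1] at hsome
      simp at hsome
    · simp only [hF, Sum.elim_inl, Sum.elim_inr] at h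
      have p1 := hWeP s
      have p2 := hWtP i'
      rw [h] at p1
      have hsome := p2.1 s
      rw [p1.1] at hsome
      simp at hsome
    · simp only [hF, Sum.elim_inl, Sum.elim_inr] at h
      have p1 := hWtP i
      have p2 := hWeP s'
      rw [← h] at p2
      have hsome := p1.1 s'
      rw [p2.1] at hsome
      simp at hsome
    · simp only [hF, Sum.elim_inr] at h
      have hi2 : i.val + 2 ≤ n := by have := i.isLt; omega
      have p1 := hWtP i
      have p2 := hWtP i'
      rw [h] at p1
      have hcol : Wt i' ⟨i.val, by omega⟩ = Wt i' ⟨i.val + 1, by omega⟩ :=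
        p1.2.1 _ _ rfl rfl
      rcases p2.2.2 _ _ hcol with h' | h' | h'
      · exact absurd (congrArg Fin.val h') (by simp)
      · have h1 : (i.val : ℕ) = i'.val := h'.1
        congr 1
        exact Fin.ext h1
      · have h1 : (i.val : ℕ) = i'.val + 1 := h'.1
        have h2 : (i.val : ℕ) + 1 = i'.val := h'.2
        omega
  have hsub : Set.range F ⊆ A := by
    rintro f ⟨k, rfl⟩
    rcases k with s | i
    · exact hWeA s
    · exact hWtA i
  have hcard : (Set.range F).ncard = 2 * n - 1 := by
    rw [← Nat.card_coe_set_eq, Nat.card_range_of_injective hinj,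
      Nat.card_eq_fintype_card, Fintype.card_sum, Fintype.card_fin, Fintype.card_fin]
    omega
  calc 2 * n - 1 = (Set.range F).ncard := hcard.symm
    _ ≤ A.ncard := Set.ncard_le_ncard hsub (Set.toFinite A)
end
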